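/- For every prime p, the identity of formal power series over ℤ holds: (Σ_{k≥0} f_3(p^k)·X^k) · (1 − p·X³) · (1 − X)³ = (1 − X²)². Equivalently, the local factor at p of the subring zeta function of ℤ³ is ζ_p(3s−1)·ζ_p(s)³ / ζ_p(2s)², where ζ_p(s) = (1 − p^{−s})^{−1}. -/

import Mathlib

open scoped BigOperators

/-- The number of subrings with identity of `ℤ^n` (componentwise operations)
of additive index `k`. -/
noncomputable def numSubrings (n k : ℕ) : ℕ :=
  Nat.card {S : Subring (Fin n → ℤ) // S.toAddSubgroup.index = k}

/-- The number of irreducible subrings of `ℤ^n` of index `p ^ e`: subrings of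
additive index `p ^ e` all of whose elements have all coordinates congruent
modulo `p`. -/
noncomputable def numIrrSubrings (n p e : ℕ) : ℕ :=
  Nat.card {S : Subring (Fin n → ℤ) //
    S.toAddSubgroup.index = p ^ e ∧
    ∀ x ∈ S, ∀ i j : Fin n, (p : ℤ) ∣ x i - x j}

/-- An integer matrix is in Hermite normal form if it is upper triangular and
`0 ≤ a i j < a i i` for `i < j`. -/
def IsHermiteNormalForm {n : ℕ} (A : Matrix (Fin n) (Fin n) ℤ) : Prop :=
  (∀ i j : Fin n, j < i → A i j = 0) ∧
  ∀ i j : Fin n, i < j → 0 ≤ A i j ∧ A i j < A i i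

/-- A subring matrix is a matrix in Hermite normal form such that the all-ones
vector lies in the ℤ-span of its columns and the componentwise product of any
two columns lies in the ℤ-span of its columns. -/
def IsSubringMatrix {n : ℕ} (A : Matrix (Fin n) (Fin n) ℤ) : Prop :=
  IsHermiteNormalForm A ∧
  (1 : Fin n → ℤ) ∈ Set.range A.mulVec ∧
  ∀ j k : Fin n, (fun i => A i j * A i k) ∈ Set.range A.mulVec

/-- For a composition `α` of length `m`, the number of `(m+1) × (m+1)` subring
matrices with diagonal `(p ^ α 0, …, p ^ α (m-1), 1)`, all entries of the first
`m` columns divisible by `p`, and last column `(1,…,1)ᵀ`. -/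
noncomputable def gComp (p : ℕ) {m : ℕ} (α : Fin m → ℕ) : ℕ :=
  Nat.card {A : Matrix (Fin (m + 1)) (Fin (m + 1)) ℤ //
    IsSubringMatrix A ∧
    (∀ i : Fin m, A i.castSucc i.castSucc = (p : ℤ) ^ α i) ∧
    (∀ i : Fin (m + 1), ∀ j : Fin m, (p : ℤ) ∣ A i j.castSucc) ∧
    ∀ i : Fin (m + 1), A i (Fin.last m) = 1}


/-- difference hom ℤ³ → ℤ² -/
def phi3 : (Fin 3 → ℤ) →+ ℤ × ℤ where
  toFun x := (x 0 - x 2, x 1 - x 2)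
  map_zero' := by simp
  map_add' x y := by simp [Prod.ext_iff]; constructor <;> ring

lemma phi3_surj : Function.Surjective phi3 := by
  intro z
  exact ⟨![z.1, z.2, 0], by simp [phi3, Prod.ext_iff]⟩

lemma phi3_mul (x y : Fin 3 → ℤ) :
    phi3 (x * y) = x 2 • phi3 y + y 2 • phi3 x + phi3 x * phi3 y := by
  simp [phi3, Prod.ext_iff]
  constructor <;> ring

/-- forward image as a non-unital subring -/
def forwardL (S : Subring (Fin 3 → ℤ)) : NonUnitalSubring (ℤ × ℤ) where
  carrier := phi3 '' S
  add_mem' := by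
    rintro _ _ ⟨x, hx, rfl⟩ ⟨y, hy, rfl⟩
    exact ⟨x + y, S.add_mem hx hy, map_add _ _ _⟩
  zero_mem' := ⟨0, S.zero_mem, map_zero _⟩
  neg_mem' := by
    rintro _ ⟨x, hx, rfl⟩
    exact ⟨-x, S.neg_mem hx, map_neg _ _⟩
  mul_mem' := by
    rintro _ _ ⟨x, hx, rfl⟩ ⟨y, hy, rfl⟩
    refine ⟨x * y - x 2 • y - y 2 • x, ?_, ?_⟩
    · exact S.sub_mem (S.sub_mem (S.mul_mem hx hy) (S.toAddSubgroup.zsmul_mem hy _))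
        (S.toAddSubgroup.zsmul_mem hx _)
    · simp only [map_sub, map_zsmul, phi3_mul]
      abel

/-- backward preimage as a subring -/
def backS (L : NonUnitalSubring (ℤ × ℤ)) : Subring (Fin 3 → ℤ) where
  carrier := phi3 ⁻¹' L
  add_mem' hx hy := by simpa [map_add] using L.add_mem hx hy
  zero_mem' := by simp only [Set.mem_preimage, map_zero]; exact L.zero_mem
  neg_mem' hx := by simpa [map_neg] using L.neg_mem hx
  one_mem' := by
    have : phi3 (1 : Fin 3 → ℤ) = 0 := by simp [phi3, Prod.ext_iff]
    simp only [Set.mem_preimage, this]; exact L.zero_mem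
  mul_mem' {x y} hx hy := by
    simp only [Set.mem_preimage, phi3_mul]
    exact L.add_mem (L.add_mem (L.toAddSubgroup.zsmul_mem hy _)
      (L.toAddSubgroup.zsmul_mem hx _)) (L.mul_mem hx hy)

lemma ker_phi3_le (S : Subring (Fin 3 → ℤ)) : phi3.ker ≤ S.toAddSubgroup := by
  intro x hx
  have h : x 0 - x 2 = 0 ∧ x 1 - x 2 = 0 := by
    simpa [phi3, AddMonoidHom.mem_ker, Prod.ext_iff] using hx
  have hx2 : x = x 2 • (1 : Fin 3 → ℤ) := by
    funext i
    fin_cases i <;> simp <;> omega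
  rw [hx2]
  exact S.toAddSubgroup.zsmul_mem S.one_mem _

lemma forwardL_toAdd (S : Subring (Fin 3 → ℤ)) :
    (forwardL S).toAddSubgroup = S.toAddSubgroup.map phi3 := by
  ext z; simp [forwardL, AddSubgroup.mem_map]; rfl

lemma backS_toAdd (L : NonUnitalSubring (ℤ × ℤ)) :
    (backS L).toAddSubgroup = L.toAddSubgroup.comap phi3 := rfl

lemma back_forward (S : Subring (Fin 3 → ℤ)) : backS (forwardL S) = S := by
  apply SetLike.ext'
  show phi3 ⁻¹' (phi3 '' S) = S
  apply subset_antisymm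
  · intro x hx
    obtain ⟨y, hy, hxy⟩ := hx
    have : x - y ∈ phi3.ker := by
      simp [AddMonoidHom.mem_ker, map_sub, hxy]
    have hS := ker_phi3_le S this
    have := S.toAddSubgroup.add_mem hS hy
    simpa using this
  · exact Set.subset_preimage_image _ _

lemma forward_back (L : NonUnitalSubring (ℤ × ℤ)) : forwardL (backS L) = L := by
  apply SetLike.ext'
  show phi3 '' (phi3 ⁻¹' L) = L
  exact Set.image_preimage_eq _ phi3_surj

lemma index_forwardL (S : Subring (Fin 3 → ℤ)) :
    (forwardL S).toAddSubgroup.index = S.toAddSubgroup.index := by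
  rw [forwardL_toAdd]
  have h := AddSubgroup.index_comap_of_surjective (S.toAddSubgroup.map phi3) phi3_surj
  rw [← h, AddSubgroup.comap_map_eq, sup_of_le_left (ker_phi3_le S)]

lemma card_stage1 (m : ℕ) :
    Nat.card {S : Subring (Fin 3 → ℤ) // S.toAddSubgroup.index = m} =
      Nat.card {L : NonUnitalSubring (ℤ × ℤ) // L.toAddSubgroup.index = m} := by
  apply Nat.card_congr
  refine ⟨fun S => ⟨forwardL S.1, by rw [index_forwardL]; exact S.2⟩,
    fun L => ⟨backS L.1, ?_⟩, fun S => by simp [back_forward], fun L => by simp [forward_back]⟩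
  have := index_forwardL (backS L.1)
  rw [forward_back] at this
  rw [← this]; exact L.2


/-- the non-unital subring of ℤ×ℤ spanned by (d1,c) and (0,d2). -/
def Ldef (d1 d2 c : ℕ) (h : (d2 : ℤ) ∣ (c : ℤ) * ((c : ℤ) - (d1 : ℤ))) :
    NonUnitalSubring (ℤ × ℤ) where
  carrier := {z : ℤ × ℤ | ∃ s t : ℤ, z.1 = s * d1 ∧ z.2 = s * c + t * d2}
  add_mem' := by
    rintro ⟨x1, x2⟩ ⟨y1, y2⟩ ⟨s, t, hs, ht⟩ ⟨s', t', hs', ht'⟩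
    exact ⟨s + s', t + t', by simp at hs hs' ht ht' ⊢; constructor <;> [rw [hs, hs']; rw [ht, ht']] <;> ring⟩
  zero_mem' := ⟨0, 0, by simp⟩
  neg_mem' := by
    rintro ⟨x1, x2⟩ ⟨s, t, hs, ht⟩
    exact ⟨-s, -t, by simp at hs ht ⊢; constructor <;> [rw [hs]; rw [ht]] <;> ring⟩
  mul_mem' := by
    rintro ⟨x1, x2⟩ ⟨y1, y2⟩ ⟨s, t, hs, ht⟩ ⟨s', t', hs', ht'⟩
    obtain ⟨e, he⟩ := h
    refine ⟨s * s' * d1, s * s' * e + s * t' * c + t * s' * c + t * t' * d2, ?_, ?_⟩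
    · simp at hs hs' ⊢; rw [hs, hs']; ring
    · simp at ht ht' ⊢
      rw [ht, ht']
      linear_combination (s * s' : ℤ) * he

lemma mem_Ldef {d1 d2 c : ℕ} {h} {z : ℤ × ℤ} :
    z ∈ Ldef d1 d2 c h ↔ ∃ s t : ℤ, z.1 = s * d1 ∧ z.2 = s * c + t * d2 := Iff.rfl

lemma zmod_int_eq_iff (n : ℕ) (a b : ℤ) : ((a : ZMod n) = b) ↔ (n : ℤ) ∣ b - a := by
  rw [eq_comm, ← sub_eq_zero, ← Int.cast_sub, ZMod.intCast_zmod_eq_zero_iff_dvd]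

lemma index_Ldef {d1 d2 c : ℕ} (hd1 : 0 < d1) (hd2 : 0 < d2) (h) :
    (Ldef d1 d2 c h).toAddSubgroup.index = d1 * d2 := by
  have hd1' : (d1 : ℤ) ≠ 0 := by exact_mod_cast hd1.ne'
  set H := (Ldef d1 d2 c h).toAddSubgroup with hH
  set f : ℤ × ℤ → ZMod d1 × ZMod d2 :=
    fun z => ((z.1 : ZMod d1), ((z.2 - c * (z.1 / d1) : ℤ) : ZMod d2)) with hf
  have key : ∀ z w : ℤ × ℤ, -z + w ∈ H → f z = f w := by
    rintro ⟨z1, z2⟩ ⟨w1, w2⟩ hm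
    obtain ⟨s, t, hs, ht⟩ := hm
    simp only [Prod.fst_add, Prod.fst_neg, Prod.snd_add, Prod.snd_neg] at hs ht
    have hw1 : w1 = z1 + s * d1 := by linarith
    have hw2 : w2 = z2 + s * c + t * d2 := by linarith
    subst hw1 hw2
    have hdiv : (z1 + s * d1) / d1 = z1 / d1 + s := Int.add_mul_ediv_right _ _ hd1'
    simp only [hf, Prod.mk.injEq]
    constructor
    · rw [zmod_int_eq_iff]; exact ⟨s, by ring⟩
    · rw [zmod_int_eq_iff, hdiv]; exact ⟨t, by ring⟩
  -- descend to the quotient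
  have : H.index = Nat.card ((ℤ × ℤ) ⧸ H) := rfl
  rw [this]
  have e : ((ℤ × ℤ) ⧸ H) ≃ ZMod d1 × ZMod d2 := by
    refine Equiv.ofBijective
      (fun q => Quotient.liftOn' q f (fun a b hab => key a b (QuotientAddGroup.leftRel_apply.mp hab))) ⟨?_, ?_⟩
    · intro q1 q2
      refine Quotient.inductionOn₂' q1 q2 ?_
      rintro ⟨z1, z2⟩ ⟨w1, w2⟩ hzw
      simp only [Quotient.liftOn'_mk, hf, Prod.mk.injEq] at hzw
      obtain ⟨h1, h2⟩ := hzw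
      rw [zmod_int_eq_iff] at h1 h2
      obtain ⟨s, hs⟩ := h1
      apply Quotient.sound'
      rw [QuotientAddGroup.leftRel_apply]
      have hdiv : w1 / d1 = z1 / d1 + s := by
        rw [show w1 = z1 + s * d1 by linarith]
        exact Int.add_mul_ediv_right _ _ hd1'
      rw [hdiv] at h2
      obtain ⟨t, ht⟩ := h2
      refine ⟨s, t, ?_, ?_⟩ <;> simp <;> linarith
    · rintro ⟨u, v⟩
      obtain ⟨a, ha⟩ := ZMod.intCast_surjective (n := d1) u
      obtain ⟨b, hb⟩ := ZMod.intCast_surjective (n := d2) v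
      refine ⟨QuotientAddGroup.mk (a, b + c * (a / d1)), ?_⟩
      show f _ = _
      simp only [hf]
      rw [Prod.mk.injEq]
      exact ⟨ha, by rw [show b + c * (a / d1) - c * (a / d1) = b by ring, hb]⟩
  rw [Nat.card_congr e, Nat.card_prod, Nat.card_zmod, Nat.card_zmod]

/-- the condition on HNF triples -/
def TriCond (m : ℕ) (T : ℕ × ℕ × ℕ) : Prop :=
  T.1 * T.2.1 = m ∧ T.2.2 < T.2.1 ∧ (T.2.1 : ℤ) ∣ (T.2.2 : ℤ) * ((T.2.2 : ℤ) - (T.1 : ℤ))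

section helpers
variable {d1 d2 c : ℕ} {h : (d2 : ℤ) ∣ (c : ℤ) * ((c : ℤ) - (d1 : ℤ))}

lemma snd_mem_Ldef (hd1 : 0 < d1) (y : ℤ) : ((0 : ℤ), y) ∈ Ldef d1 d2 c h ↔ (d2 : ℤ) ∣ y := by
  constructor
  · rintro ⟨s, t, hs, ht⟩
    simp only at hs ht
    have hs0 : s = 0 := by
      have : (d1 : ℤ) ≠ 0 := by exact_mod_cast hd1.ne'
      rcases mul_eq_zero.mp hs.symm with h | h
      · exact h
      · exact absurd h this
    exact ⟨t, by rw [ht, hs0]; ring⟩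
  · rintro ⟨t, rfl⟩
    exact ⟨0, t, by simp, by ring⟩
end helpers

lemma card_stage3 (m : ℕ) (hm : 0 < m) :
    Nat.card {L : NonUnitalSubring (ℤ × ℤ) // L.toAddSubgroup.index = m} =
      Nat.card {T : ℕ × ℕ × ℕ // TriCond m T} := by
  classical
  have pos : ∀ {d1 d2 : ℕ}, d1 * d2 = m → 0 < d1 ∧ 0 < d2 := by
    intro d1 d2 hd
    refine ⟨Nat.pos_of_ne_zero ?_, Nat.pos_of_ne_zero ?_⟩ <;> rintro rfl <;> simp at hd <;> omega
  symm
  apply Nat.card_congr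
  refine Equiv.ofBijective (fun T => ⟨Ldef T.1.1 T.1.2.1 T.1.2.2 T.2.2.2, ?_⟩) ⟨?_, ?_⟩
  · rcases T with ⟨⟨d1, d2, c⟩, hT⟩
    rw [index_Ldef (pos hT.1).1 (pos hT.1).2]
    exact hT.1
  · -- injective
    rintro ⟨⟨d1, d2, c⟩, hT⟩ ⟨⟨d1', d2', c'⟩, hT'⟩ heq
    simp only [Subtype.mk.injEq] at heq ⊢
    obtain ⟨hd1, hd2⟩ := pos hT.1
    obtain ⟨hd1', hd2'⟩ := pos hT'.1
    have hmem : ∀ z : ℤ × ℤ, z ∈ Ldef d1 d2 c hT.2.2 ↔ z ∈ Ldef d1' d2' c' hT'.2.2 := by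
      intro z; rw [heq]
    -- d2 = d2'
    have e2 : d2 = d2' := by
      have h1 := (snd_mem_Ldef hd1' (d2 : ℤ)).mp
        ((hmem _).mp ((snd_mem_Ldef hd1 _).mpr dvd_rfl))
      have h2 := (snd_mem_Ldef hd1 (d2' : ℤ)).mp
        ((hmem _).mpr ((snd_mem_Ldef hd1' _).mpr dvd_rfl))
      exact Nat.dvd_antisymm (Int.ofNat_dvd.mp h2) (Int.ofNat_dvd.mp h1)
    -- (d1, c) ∈ L'
    have hm1 : ((d1 : ℤ), (c : ℤ)) ∈ Ldef d1' d2' c' hT'.2.2 :=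
      (hmem _).mp ⟨1, 0, by simp, by simp⟩
    have hm1' : ((d1' : ℤ), (c' : ℤ)) ∈ Ldef d1 d2 c hT.2.2 :=
      (hmem _).mpr ⟨1, 0, by simp, by simp⟩
    obtain ⟨s, t, hs, ht⟩ := hm1
    obtain ⟨s', t', hs', ht'⟩ := hm1'
    simp only at hs ht hs' ht'
    have e1 : d1 = d1' := by
      have hA : (d1' : ℤ) ∣ (d1 : ℤ) := ⟨s, by rw [hs]; ring⟩
      have hB : (d1 : ℤ) ∣ (d1' : ℤ) := ⟨s', by rw [hs']; ring⟩
      exact Nat.dvd_antisymm (by exact_mod_cast hB) (by exact_mod_cast hA)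
    have hs1 : s = 1 := by
      have hne : (d1' : ℤ) ≠ 0 := by exact_mod_cast hd1'.ne'
      have : (1 : ℤ) * d1' = s * d1' := by rw [one_mul, ← hs, e1]
      exact (mul_right_cancel₀ hne this).symm
    have ec : c = c' := by
      rw [hs1, one_mul] at ht
      -- c = c' + t * d2', with 0 ≤ c < d2 = d2', 0 ≤ c' < d2'
      have hlt : (c : ℤ) < d2' := by exact_mod_cast e2 ▸ hT.2.1
      have hlt' : (c' : ℤ) < d2' := by exact_mod_cast hT'.2.1
      have hc0 : (0 : ℤ) ≤ c := Int.ofNat_nonneg c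
      have hc0' : (0 : ℤ) ≤ c' := Int.ofNat_nonneg c'
      have hd2pos : (0 : ℤ) < d2' := by exact_mod_cast hd2'
      have ht0 : t = 0 := by
        rcases lt_trichotomy t 0 with hlt0 | rfl | hgt0
        · nlinarith [mul_le_mul_of_nonneg_right (Int.add_one_le_iff.mpr hlt0) hd2pos.le]
        · rfl
        · nlinarith [mul_le_mul_of_nonneg_right (Int.add_one_le_iff.mpr hgt0) hd2pos.le]
      rw [ht0] at ht
      exact_mod_cast (by linarith : (c : ℤ) = c')
    exact Prod.ext e1 (Prod.ext e2 ec)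
  · -- surjective
    rintro ⟨L, hL⟩
    -- all m-multiples are in L
    have hnsmul : ∀ z : ℤ × ℤ, m • z ∈ L.toAddSubgroup := by
      intro z
      have := AddSubgroup.nsmul_index_mem L.toAddSubgroup z
      rwa [hL] at this
    -- second coordinate subgroup
    set K2 := AddSubgroup.comap (AddMonoidHom.inr ℤ ℤ) L.toAddSubgroup with hK2
    obtain ⟨g2, hg2⟩ := Int.subgroup_cyclic K2
    have hmK2 : (m : ℤ) ∈ K2 := by
      have := hnsmul (0, 1)
      have h' : ((0 : ℤ), (m : ℤ)) ∈ L := by simpa [AddSubgroup.mem_comap, Prod.ext_iff] using this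
      exact h'
    have memK2_iff : ∀ y : ℤ, y ∈ K2 ↔ g2 ∣ y := by
      intro y
      rw [hg2, AddSubgroup.mem_closure_singleton]
      constructor
      · rintro ⟨n, rfl⟩; exact Dvd.intro n (by rw [smul_eq_mul]; ring)
      · rintro ⟨n, rfl⟩; exact ⟨n, by rw [smul_eq_mul]; ring⟩
    have hg2ne : g2 ≠ 0 := by
      rintro rfl
      have := (memK2_iff _).mp hmK2
      simp at this
      omega
    set d2 := g2.natAbs with hd2def
    have hd2 : 0 < d2 := Int.natAbs_pos.mpr hg2ne
    have memK2_iff' : ∀ y : ℤ, ((0 : ℤ), y) ∈ L ↔ (d2 : ℤ) ∣ y := by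
      intro y
      rw [show (((0 : ℤ), y) ∈ L) ↔ y ∈ K2 from Iff.rfl, memK2_iff, Int.natAbs_dvd]
    -- first coordinate subgroup
    set K1 := AddSubgroup.map (AddMonoidHom.fst ℤ ℤ) L.toAddSubgroup with hK1
    obtain ⟨g1, hg1⟩ := Int.subgroup_cyclic K1
    have hmK1 : (m : ℤ) ∈ K1 := by
      refine ⟨((m : ℤ), 0), ?_, rfl⟩
      have := hnsmul (1, 0)
      simpa [Prod.ext_iff] using this
    have memK1_iff : ∀ x : ℤ, x ∈ K1 ↔ g1 ∣ x := by
      intro x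
      rw [hg1, AddSubgroup.mem_closure_singleton]
      constructor
      · rintro ⟨n, rfl⟩; exact Dvd.intro n (by rw [smul_eq_mul]; ring)
      · rintro ⟨n, rfl⟩; exact ⟨n, by rw [smul_eq_mul]; ring⟩
    have hg1ne : g1 ≠ 0 := by
      rintro rfl
      have := (memK1_iff _).mp hmK1
      simp at this
      omega
    set d1 := g1.natAbs with hd1def
    have hd1 : 0 < d1 := Int.natAbs_pos.mpr hg1ne
    have memK1_iff' : ∀ x : ℤ, x ∈ K1 ↔ (d1 : ℤ) ∣ x := by
      intro x; rw [memK1_iff, Int.natAbs_dvd]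
    -- get an element (d1, y1) ∈ L
    have hd1K1 : (d1 : ℤ) ∈ K1 := (memK1_iff' _).mpr dvd_rfl
    obtain ⟨⟨x1, y1⟩, hz, hx1⟩ := hd1K1
    simp only [AddMonoidHom.coe_fst] at hx1
    subst hx1
    -- (0, d2) ∈ L
    have h0d2 : ((0 : ℤ), (d2 : ℤ)) ∈ L := (memK2_iff' _).mpr dvd_rfl
    -- c
    set c := y1 % (d2 : ℤ) with hcdef
    have hd2z : (0 : ℤ) < (d2 : ℤ) := by exact_mod_cast hd2
    have hc0 : 0 ≤ c := Int.emod_nonneg _ hd2z.ne'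
    have hclt : c < d2 := Int.emod_lt_of_pos _ hd2z
    have hd1c : ((d1 : ℤ), c) ∈ L := by
      have : ((d1 : ℤ), c) = ((d1 : ℤ), y1) - (y1 / d2) • ((0 : ℤ), (d2 : ℤ)) := by
        rw [Prod.ext_iff]
        constructor
        · simp
        · simp only [Prod.snd_sub, Prod.smul_snd, smul_eq_mul]
          rw [hcdef, Int.emod_def]; ring

      rw [this]
      exact L.toAddSubgroup.sub_mem hz (L.toAddSubgroup.zsmul_mem h0d2 _)
    -- description of L
    have hrep : ∀ z : ℤ × ℤ, z ∈ L → ∃ s t : ℤ, z.1 = s * d1 ∧ z.2 = s * c + t * d2 := by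
      rintro ⟨z1, z2⟩ hzL
      have : z1 ∈ K1 := ⟨(z1, z2), hzL, rfl⟩
      obtain ⟨s, hs⟩ := (memK1_iff' _).mp this
      have hrem : ((0 : ℤ), z2 - s * c) ∈ L := by
        have : ((0 : ℤ), z2 - s * c) = (z1, z2) - s • ((d1 : ℤ), c) := by
          rw [Prod.ext_iff]
          constructor
          · simp [hs]; ring
          · simp
        rw [this]
        exact L.toAddSubgroup.sub_mem hzL (L.toAddSubgroup.zsmul_mem hd1c _)
      obtain ⟨t, ht⟩ := (memK2_iff' _).mp hrem
      exact ⟨s, t, by rw [hs]; ring, by linarith⟩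
    -- multiplicativity gives the divisibility
    have hdvd : (d2 : ℤ) ∣ c * (c - d1) := by
      have hsq : ((d1 : ℤ) * d1, c * c) ∈ L := by
        have := L.mul_mem hd1c hd1c
        simpa [Prod.ext_iff] using this
      obtain ⟨s, t, hs, ht⟩ := hrep _ hsq
      simp only at hs ht
      have hselim : s = d1 := by
        have hne : (d1 : ℤ) ≠ 0 := by exact_mod_cast hd1.ne'
        have : s * (d1:ℤ) = (d1:ℤ) * (d1:ℤ) := by linarith
        have := mul_right_cancel₀ hne this
        exact_mod_cast this
      refine ⟨t, ?_⟩
      rw [hselim] at ht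
      linarith [ht]
    -- package
    have hceq : ((c.toNat : ℤ)) = c := Int.toNat_of_nonneg hc0
    have hdvd' : ((d2 : ℤ)) ∣ (c.toNat : ℤ) * ((c.toNat : ℤ) - (d1 : ℤ)) := by
      rw [hceq]; exact hdvd
    have hLeq : Ldef d1 d2 c.toNat hdvd' = L := by
      apply SetLike.ext
      intro z
      rw [mem_Ldef]
      constructor
      · rintro ⟨s, t, hs, ht⟩
        have : z = s • ((d1 : ℤ), c) + t • ((0 : ℤ), (d2 : ℤ)) := by
          rw [Prod.ext_iff]
          constructor
          · simp [hs, mul_comm]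
          · simp only [Prod.snd_add, Prod.smul_snd, smul_eq_mul]
            rw [ht, hceq]
        rw [this]
        exact L.toAddSubgroup.add_mem (L.toAddSubgroup.zsmul_mem hd1c _)
          (L.toAddSubgroup.zsmul_mem h0d2 _)
      · intro hzL
        obtain ⟨s, t, hs, ht⟩ := hrep z hzL
        exact ⟨s, t, hs, by rw [ht, hceq]⟩
    have hidx : d1 * d2 = m := by
      rw [← hL, ← hLeq, index_Ldef hd1 hd2]
    refine ⟨⟨(d1, d2, c.toNat), ⟨hidx, ?_, hdvd'⟩⟩, ?_⟩
    · exact_mod_cast hceq ▸ hclt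
    · exact Subtype.ext hLeq


/-- local count of last-column entries -/
def nn (p a b : ℕ) : ℕ := if b = 0 then 1 else if 2 * a < b then 2 * p ^ a else p ^ (b / 2)

section roots
variable {p : ℕ}

lemma pow_dvd_pow_iff_int (hp : p.Prime) {i j : ℕ} (hij : (p:ℤ)^i ∣ (p:ℤ)^j) : i ≤ j := by
  have : (p:ℕ)^i ∣ p^j := by exact_mod_cast hij
  exact (Nat.pow_dvd_pow_iff_le_right hp.one_lt).mp this

lemma val_facts (hp : p.Prime) {c : ℤ} (hc : c ≠ 0) (a : ℕ) (hca : c ≠ (p:ℤ)^a) :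
    haveI : Fact p.Prime := ⟨hp⟩
    min (padicValInt p c) (padicValInt p (c - (p:ℤ)^a)) ≤ a := by
  haveI : Fact p.Prime := ⟨hp⟩
  set v := padicValInt p c
  set w := padicValInt p (c - (p:ℤ)^a)
  by_contra hlt
  push_neg at hlt
  have h1 : (p:ℤ)^(min v w) ∣ c := dvd_trans (pow_dvd_pow _ (min_le_left _ _)) (padicValInt_dvd c)
  have h2 : (p:ℤ)^(min v w) ∣ (c - (p:ℤ)^a) :=
    dvd_trans (pow_dvd_pow _ (min_le_right _ _)) (padicValInt_dvd _)
  have h3 : (p:ℤ)^(min v w) ∣ (p:ℤ)^a := by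
    have := dvd_sub h1 h2
    simpa using this
  exact absurd (pow_dvd_pow_iff_int hp h3) (by omega)

lemma R1 (hp : p.Prime) {a e : ℕ} (he : 0 < e) (c : ℤ) :
    (p:ℤ)^(2*a+e) ∣ c * (c - (p:ℤ)^a) ↔
      ((p:ℤ)^(a+e) ∣ c ∨ (p:ℤ)^(a+e) ∣ (c - (p:ℤ)^a)) := by
  haveI : Fact p.Prime := ⟨hp⟩
  have hp1 : (1:ℤ) < p := by exact_mod_cast hp.one_lt
  constructor
  · intro h
    by_cases hc : c = 0
    · exact Or.inl (by simp [hc])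
    by_cases hca : c = (p:ℤ)^a
    · exact Or.inr (by simp [hca])
    have hca' : c - (p:ℤ)^a ≠ 0 := sub_ne_zero.mpr hca
    set v := padicValInt p c with hv
    set w := padicValInt p (c - (p:ℤ)^a) with hw
    have hsum : 2*a+e ≤ v + w := by
      have := (padicValInt_dvd_iff (p := p) (2*a+e) (c * (c - (p:ℤ)^a))).mp h
      rcases this with h0 | hle
      · exact absurd h0 (mul_ne_zero hc hca')
      · rwa [padicValInt.mul hc hca'] at hle
    have hmin : min v w ≤ a := val_facts hp hc a hca
    rcases le_or_gt (a+e) v with hge | hlt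
    · exact Or.inl (dvd_trans (pow_dvd_pow _ hge) (padicValInt_dvd c))
    · refine Or.inr (dvd_trans (pow_dvd_pow _ ?_) (padicValInt_dvd _))
      omega
  · rintro (⟨u, hu⟩ | ⟨u, hu⟩)
    · have e1 : (p:ℤ)^(a+e) = (p:ℤ)^a * (p:ℤ)^e := by rw [← pow_add]
      have e2 : (p:ℤ)^(2*a+e) = (p:ℤ)^a * ((p:ℤ)^a * (p:ℤ)^e) := by
        rw [← pow_add, ← pow_add]; congr 1; omega
      refine ⟨u * ((p:ℤ)^e * u - 1), ?_⟩
      rw [hu, e1, e2]; ring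
    · have e1 : (p:ℤ)^(a+e) = (p:ℤ)^a * (p:ℤ)^e := by rw [← pow_add]
      have e2 : (p:ℤ)^(2*a+e) = (p:ℤ)^a * ((p:ℤ)^a * (p:ℤ)^e) := by
        rw [← pow_add, ← pow_add]; congr 1; omega
      have hc : c = (p:ℤ)^a + (p:ℤ)^(a+e) * u := by linarith
      refine ⟨u * ((p:ℤ)^e * u + 1), ?_⟩
      rw [hc, e1, e2]; ring

lemma R2 (hp : p.Prime) {a b : ℕ} (hab : b ≤ 2*a) (hb : 0 < b) (c : ℤ) :
    (p:ℤ)^b ∣ c * (c - (p:ℤ)^a) ↔ (p:ℤ)^(b - b/2) ∣ c := by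
  haveI : Fact p.Prime := ⟨hp⟩
  set f := b / 2 with hf
  set g := b - b / 2 with hg
  have hfg : f + g = b := by omega
  have hfa : f ≤ a := by omega
  have hga : g ≤ a := by omega
  have hfg' : f ≤ g := by omega
  constructor
  · intro h
    by_cases hc : c = 0
    · simp [hc]
    by_cases hca : c = (p:ℤ)^a
    · rw [hca]; exact pow_dvd_pow _ hga
    have hca' : c - (p:ℤ)^a ≠ 0 := sub_ne_zero.mpr hca
    set v := padicValInt p c with hv
    set w := padicValInt p (c - (p:ℤ)^a) with hw
    have hsum : b ≤ v + w := by
      have := (padicValInt_dvd_iff (p := p) b (c * (c - (p:ℤ)^a))).mp h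
      rcases this with h0 | hle
      · exact absurd h0 (mul_ne_zero hc hca')
      · rwa [padicValInt.mul hc hca'] at hle
    refine dvd_trans (pow_dvd_pow _ ?_) (padicValInt_dvd c)
    by_contra hlt
    push_neg at hlt
    -- v < g ≤ a
    have hva : v < a := by omega
    have hwv : w ≤ v := by
      by_contra hwge
      push_neg at hwge
      have h1 : (p:ℤ)^(v+1) ∣ (c - (p:ℤ)^a) :=
        dvd_trans (pow_dvd_pow _ (by omega)) (padicValInt_dvd _)
      have h2 : (p:ℤ)^(v+1) ∣ (p:ℤ)^a := pow_dvd_pow _ (by omega)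
      have h3 : (p:ℤ)^(v+1) ∣ c := by
        have := dvd_add h1 h2
        simpa using this
      have := (padicValInt_dvd_iff (p := p) (v+1) c).mp h3
      rcases this with h0 | hle
      · exact hc h0
      · omega
    omega
  · rintro ⟨u, hu⟩
    have e1 : (p:ℤ)^g = (p:ℤ)^f * (p:ℤ)^(g-f) := by rw [← pow_add]; congr 1; omega
    have e2 : (p:ℤ)^a = (p:ℤ)^f * (p:ℤ)^(a-f) := by rw [← pow_add]; congr 1; omega
    have e3 : (p:ℤ)^b = (p:ℤ)^f * ((p:ℤ)^f * (p:ℤ)^(g-f)) := by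
      rw [← pow_add, ← pow_add]; congr 1; omega
    refine ⟨u * ((p:ℤ)^(g-f) * u - (p:ℤ)^(a-f)), ?_⟩
    rw [hu, e1, e2, e3]; ring
end roots

def Tc (p k : ℕ) : ℕ := ∑ a ∈ Finset.range (k + 1), nn p a (k - a)




/-- residue-class elements of `Fin N` -/
def resEquiv (M K r N : ℕ) (hM : 0 < M) (hr : r < M) (hN : N = M * K) :
    {c : Fin N // (c : ℕ) % M = r} ≃ Fin K where
  toFun c := ⟨(c : ℕ) / M, by
    have hlt : (c.1 : ℕ) < M * K := hN ▸ c.1.2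
    exact Nat.div_lt_of_lt_mul (by rwa [mul_comm] at hlt ⊢)⟩
  invFun q := ⟨⟨M * q + r, by
    have h1 : M * ((q : ℕ) + 1) ≤ M * K := Nat.mul_le_mul_left M q.2
    have h2 : M * ((q : ℕ) + 1) = M * q + M := by ring
    omega⟩, by simp [Nat.mul_add_mod, Nat.mod_eq_of_lt hr]⟩
  left_inv c := by
    ext
    simp only [Fin.val_mk]
    conv_rhs => rw [← Nat.div_add_mod (c.1 : ℕ) M]
    rw [c.2]
  right_inv q := by
    ext
    simp only [Fin.val_mk]
    rw [Nat.mul_add_div hM, Nat.div_eq_of_lt hr]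
    simp

lemma card_res (M K r N : ℕ) (hM : 0 < M) (hr : r < M) (hN : N = M * K) :
    Nat.card {c : Fin N // (c : ℕ) % M = r} = K := by
  rw [Nat.card_congr (resEquiv M K r N hM hr hN), Nat.card_eq_fintype_card, Fintype.card_fin]

/-- translation between ℤ-dvd and ℕ-mod conditions -/
lemma dvd_iff_mod₀ (M : ℕ) (hM : 0 < M) (c : ℕ) : ((M:ℤ) ∣ (c:ℤ)) ↔ c % M = 0 := by
  rw [Int.natCast_dvd_natCast]
  exact Nat.dvd_iff_mod_eq_zero

lemma dvd_iff_mod₁ (M r : ℕ) (hM : 0 < M) (hr : r < M) (c : ℕ) :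
    ((M:ℤ) ∣ ((c:ℤ) - (r:ℤ))) ↔ c % M = r := by
  constructor
  · rintro ⟨q, hq⟩
    have hq' : (c:ℤ) = M * q + r := by linarith
    have hq0 : 0 ≤ q := by nlinarith [Int.ofNat_nonneg c, (by exact_mod_cast hM : (0:ℤ) < (M:ℤ)),
      (by exact_mod_cast hr : (r:ℤ) < (M:ℤ))]
    obtain ⟨qn, rfl⟩ := Int.eq_ofNat_of_zero_le hq0
    have hcn : c = M * qn + r := by exact_mod_cast hq'
    rw [hcn, Nat.mul_add_mod, Nat.mod_eq_of_lt hr]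
  · intro h
    refine ⟨(c / M : ℕ), ?_⟩
    have := Nat.div_add_mod c M
    rw [h] at this
    have h2 : ((c:ℤ)) = (M:ℤ) * ((c/M : ℕ):ℤ) + (r:ℤ) := by exact_mod_cast this.symm
    linarith

lemma card_fiber {p : ℕ} (hp : p.Prime) (a B : ℕ) :
    Nat.card {c : Fin (p ^ B) // (p:ℤ)^B ∣ (c:ℤ) * ((c:ℤ) - (p:ℤ)^a)} = nn p a B := by
  classical
  have hp0 : 0 < p := hp.pos
  rcases Nat.eq_zero_or_pos B with rfl | hB
  · -- B = 0
    rw [nn]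
    simp only [if_pos rfl]
    have : ∀ c : Fin (p ^ 0), (p:ℤ)^0 ∣ (c:ℤ) * ((c:ℤ) - (p:ℤ)^a) := by intro c; simp
    rw [Nat.card_congr (Equiv.subtypeUnivEquiv this), Nat.card_eq_fintype_card]
    simp
  rcases lt_or_ge (2*a) B with hcase | hcase
  · -- 2a < B : two residue classes mod p^(B-a)
    obtain ⟨e, rfl⟩ : ∃ e, B = 2*a + e := ⟨B - 2*a, by omega⟩
    have he : 0 < e := by omega
    set M := p ^ (a + e) with hM
    have hMpos : 0 < M := pow_pos hp0 _
    have hpa : p ^ a < M := Nat.pow_lt_pow_right hp.one_lt (by omega)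
    have key : ∀ c : Fin (p ^ (2*a+e)),
        ((p:ℤ)^(2*a+e) ∣ (c:ℤ) * ((c:ℤ) - (p:ℤ)^a)) ↔
          ((c : ℕ) % M = 0 ∨ (c : ℕ) % M = p ^ a) := by
      intro c
      rw [R1 hp he]
      rw [show ((p:ℤ)^(a+e)) = ((M : ℕ) : ℤ) by push_cast [hM]; ring]
      rw [dvd_iff_mod₀ M hMpos]
      rw [show ((p:ℤ)^a) = ((p^a : ℕ) : ℤ) by push_cast; ring]
      rw [dvd_iff_mod₁ M (p^a) hMpos hpa]
    rw [Nat.card_congr (Equiv.subtypeEquivRight key)]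
    have hdisj : ∀ c : Fin (p ^ (2*a+e)), ¬((c : ℕ) % M = 0 ∧ (c : ℕ) % M = p ^ a) := by
      rintro c ⟨h1, h2⟩
      rw [h1] at h2
      exact absurd h2.symm (pow_pos hp0 a).ne'
    rw [Nat.card_congr (subtypeOrEquiv _ _ (Pi.disjoint_iff.mpr fun c =>
      Prop.disjoint_iff.mpr fun hh => (hdisj c) hh))]
    rw [Nat.card_sum]
    have hN : p ^ (2*a+e) = M * p ^ a := by rw [hM, ← pow_add]; congr 1; omega
    rw [card_res M (p^a) 0 _ hMpos hMpos hN, card_res M (p^a) (p^a) _ hMpos hpa hN]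
    rw [nn]
    rw [if_neg (by omega), if_pos (by omega)]
    omega
  · -- 2a ≥ B ≥ 1
    set M := p ^ (B - B/2) with hM
    have hMpos : 0 < M := pow_pos hp0 _
    have key : ∀ c : Fin (p ^ B),
        ((p:ℤ)^B ∣ (c:ℤ) * ((c:ℤ) - (p:ℤ)^a)) ↔ (c : ℕ) % M = 0 := by
      intro c
      rw [R2 hp hcase hB]
      rw [show ((p:ℤ)^(B - B/2)) = ((M : ℕ) : ℤ) by push_cast [hM]; ring]
      exact dvd_iff_mod₀ M hMpos _
    rw [Nat.card_congr (Equiv.subtypeEquivRight key)]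
    have hN : p ^ B = M * p ^ (B/2) := by rw [hM, ← pow_add]; congr 1; omega
    rw [card_res M (p^(B/2)) 0 _ hMpos hMpos hN]
    rw [nn, if_neg (by omega), if_neg (by omega)]



lemma card_triples {p : ℕ} (hp : p.Prime) (k : ℕ) :
    Nat.card {T : ℕ × ℕ × ℕ // TriCond (p ^ k) T} =
      ∑ a ∈ Finset.range (k + 1), nn p a (k - a) := by
  classical
  set G : (Σ a : Fin (k + 1),
      {c : Fin (p ^ (k - (a : ℕ))) // (p:ℤ)^(k - (a:ℕ)) ∣ (c:ℤ) * ((c:ℤ) - (p:ℤ)^(a:ℕ))}) →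
      {T : ℕ × ℕ × ℕ // TriCond (p ^ k) T} := fun x =>
    ⟨(p ^ (x.1 : ℕ), p ^ (k - (x.1 : ℕ)), (x.2.1 : ℕ)), by
      refine ⟨?_, x.2.1.2, ?_⟩
      · rw [← pow_add]; congr 1; omega
      · push_cast
        exact x.2.2⟩ with hG
  have hbij : Function.Bijective G := by
    constructor
    · rintro ⟨⟨a, ha⟩, c, hc⟩ ⟨⟨a', ha'⟩, c', hc'⟩ h
      have h1 : p ^ a = p ^ a' := congrArg (fun t => t.1.1) h
      have h3 : (c : ℕ) = c' := congrArg (fun t => t.1.2.2) h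
      have haa : a = a' := Nat.pow_right_injective hp.two_le h1
      subst haa
      have hcc : c = c' := Fin.ext h3
      subst hcc
      rfl
    · rintro ⟨⟨d1, d2, c⟩, hT⟩
      obtain ⟨hprod, hlt, hdvd⟩ := hT
      have hd1 : d1 ∣ p ^ k := ⟨d2, hprod.symm⟩
      obtain ⟨a, hak, rfl⟩ := (Nat.dvd_prime_pow hp).mp hd1
      have hd2 : d2 = p ^ (k - a) := by
        have hppos : 0 < p ^ a := pow_pos hp.pos _
        have : p ^ a * d2 = p ^ a * p ^ (k - a) := by
          rw [hprod, ← pow_add]; congr 1; omega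
        exact Nat.eq_of_mul_eq_mul_left hppos this
      subst hd2
      refine ⟨⟨⟨a, by omega⟩, ⟨⟨c, hlt⟩, ?_⟩⟩, ?_⟩
      · show (p:ℤ)^(k-a) ∣ (c:ℤ) * ((c:ℤ) - (p:ℤ)^a)
        push_cast at hdvd
        exact hdvd
      · rfl
  rw [← Nat.card_congr (Equiv.ofBijective G hbij)]
  letI : ∀ a : Fin (k + 1), Fintype
      {c : Fin (p ^ (k - (a : ℕ))) // (p:ℤ)^(k - (a:ℕ)) ∣ (c:ℤ) * ((c:ℤ) - (p:ℤ)^(a:ℕ))} :=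
    fun a => Fintype.ofFinite _
  rw [Nat.card_eq_fintype_card, Fintype.card_sigma]
  rw [← Fin.sum_univ_eq_sum_range (fun a => nn p a (k - a))]
  congr 1
  funext a
  rw [← Nat.card_eq_fintype_card, card_fiber hp]

lemma numSubrings_eq_Tc {p : ℕ} (hp : p.Prime) (k : ℕ) : numSubrings 3 (p ^ k) = Tc p k := by
  rw [numSubrings, card_stage1, card_stage3 _ (pow_pos hp.pos k), card_triples hp, Tc]



lemma nn_shift (p a b : ℕ) : nn p (a + 1) (b + 2) = p * nn p a b := by
  rcases Nat.eq_zero_or_pos b with rfl | hb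
  · norm_num [nn]; intro h; omega
  · unfold nn
    by_cases hlt : 2 * a < b
    · rw [if_neg (by omega), if_pos (by omega), if_neg (by omega), if_pos hlt]; ring
    · rw [if_neg (by omega), if_neg (by omega), if_neg (by omega), if_neg hlt,
        show (b + 2) / 2 = b / 2 + 1 by omega, pow_succ]; ring

lemma nn_one_right (p a : ℕ) : nn p a 1 = if a = 0 then 2 else 1 := by
  unfold nn
  rcases Nat.eq_zero_or_pos a with rfl | ha
  · norm_num
  · rw [if_neg (by omega), if_neg (by omega), if_neg (by omega)]
    norm_num

lemma Tc_zero (p : ℕ) : Tc p 0 = 1 := by simp [Tc, nn]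

lemma Tc_one (p : ℕ) : Tc p 1 = 3 := by
  rw [Tc]
  rw [Finset.sum_range_succ, Finset.sum_range_one]
  norm_num [nn]

lemma Tc_two (p : ℕ) : Tc p 2 = 4 := by
  rw [Tc]
  rw [Finset.sum_range_succ, Finset.sum_range_succ, Finset.sum_range_one]
  norm_num [nn]

lemma Tc_rec (p k : ℕ) : Tc p (k + 3) = p * Tc p k + 4 := by
  rw [Tc, Finset.sum_range_succ']
  have h3 : k + 3 = (k + 2) + 1 := by omega
  rw [show k + 3 = (k + 2) + 1 from rfl, Finset.sum_range_succ, show k + 2 = (k + 1) + 1 from rfl,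
    Finset.sum_range_succ]
  have e1 : ∀ a ∈ Finset.range (k + 1),
      nn p (a + 1) (k + 2 + 1 - (a + 1)) = p * nn p a (k - a) := by
    intro a ha
    rw [show k + 2 + 1 - (a + 1) = (k - a) + 2 by
      have := Finset.mem_range.mp ha; omega, nn_shift]
  rw [Finset.sum_congr rfl e1, ← Finset.mul_sum]
  rw [show k + 1 + 1 + 1 - (k + 1 + 1) = 1 by omega,
    show k + 1 + 1 + 1 - (k + 1 + 1 + 1) = 0 by omega,
    show k + 1 + 1 + 1 - 0 = k + 3 by omega]
  have v1 : nn p (k + 1 + 1) 1 = 1 := by rw [nn_one_right, if_neg (by omega)]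
  have v2 : nn p (k + 1 + 1 + 1) 0 = 1 := by simp [nn]
  have v3 : nn p 0 (k + 3) = 2 := by
    rw [nn, if_neg (by omega), if_pos (by omega)]; norm_num
  rw [v1, v2, v3, Tc]

open PowerSeries in
theorem zeta_Z3_local (p : ℕ) (hp : p.Prime) :
    (PowerSeries.mk fun k => (numSubrings 3 (p ^ k) : ℤ)) *
        (1 - PowerSeries.C (p : ℤ) * PowerSeries.X ^ 3) *
        (1 - PowerSeries.X) ^ 3 =
      (1 - PowerSeries.X ^ 2) ^ 2 := by
  have hmk : (PowerSeries.mk fun k => (numSubrings 3 (p ^ k) : ℤ)) =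
      PowerSeries.mk fun k => ((Tc p k : ℤ)) := by
    ext n
    simp only [coeff_mk]
    exact_mod_cast congrArg (Nat.cast : ℕ → ℤ) (numSubrings_eq_Tc hp n)
  rw [hmk]
  set cs : ℕ → ℤ := fun n => if n = 0 then 1 else if n = 1 then 3 else 4 with hcs
  have step1 : (PowerSeries.mk fun k => ((Tc p k : ℤ))) * (1 - C (p : ℤ) * X ^ 3) =
      PowerSeries.mk cs := by
    have hrw : (PowerSeries.mk fun k => ((Tc p k : ℤ))) * (1 - C (p : ℤ) * X ^ 3) =
        (PowerSeries.mk fun k => ((Tc p k : ℤ))) -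
          ((PowerSeries.mk fun k => ((Tc p k : ℤ))) * C (p : ℤ)) * X ^ 3 := by ring
    rw [hrw]
    ext n
    rw [map_sub, coeff_mk, coeff_mul_X_pow', coeff_mk]
    rcases n with _ | _ | _ | m
    · simp [cs, Tc_zero]
    · simp [cs, Tc_one]
    · simp [cs, Tc_two]
    · rw [if_pos (by omega)]
      rw [show m + 3 - 3 = m by omega, coeff_mul_C, coeff_mk]
      have := Tc_rec p m
      have hcast : ((Tc p (m + 3) : ℤ)) = (p : ℤ) * (Tc p m : ℤ) + 4 := by exact_mod_cast this
      simp only [cs]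
      rw [if_neg (by omega), if_neg (by omega), hcast]
      ring
  have step2 : PowerSeries.mk cs * (1 - X) = (1 + X) ^ 2 := by
    have hexp : ((1 : ℤ⟦X⟧) + X) ^ 2 = 1 + (X + (X + X ^ 2)) := by ring
    have hrw : PowerSeries.mk cs * (1 - X) = PowerSeries.mk cs - PowerSeries.mk cs * X := by ring
    rw [hexp, hrw]
    ext n
    rw [map_sub, coeff_mk, map_add, map_add, map_add, coeff_one, coeff_X, coeff_X_pow]
    rcases n with _ | _ | _ | m
    · simp [cs]
    · rw [coeff_succ_mul_X, coeff_mk]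
      simp [cs]
    · rw [coeff_succ_mul_X, coeff_mk]
      simp [cs]
    · rw [coeff_succ_mul_X, coeff_mk]
      simp only [cs]
      rw [if_neg (by omega), if_neg (by omega), if_neg (by omega), if_neg (by omega),
        if_neg (by omega), if_neg (by omega), if_neg (by omega)]
      norm_num
  calc (PowerSeries.mk fun k => ((Tc p k : ℤ))) * (1 - C (p : ℤ) * X ^ 3) * (1 - X) ^ 3
      = ((PowerSeries.mk fun k => ((Tc p k : ℤ))) * (1 - C (p : ℤ) * X ^ 3) * (1 - X)) *
        (1 - X) ^ 2 := by ring
    _ = (PowerSeries.mk cs * (1 - X)) * (1 - X) ^ 2 := by rw [step1]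
    _ = (1 + X) ^ 2 * (1 - X) ^ 2 := by rw [step2]
    _ = (1 - X ^ 2) ^ 2 := by ring
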